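/- arXiv:2002.08252 — 3 statements merged into one kernel-verified Lean document; each statement's English description precedes it below -/
import Mathlib

section
/- Let Ω ⊊ ℂ be a domain asymptotically starlike at infinity and z ∈ Ω. Then: (1) τ_z ≠ 0; (2) if δ_Ω(z) > 1/2 then τ_z < 0; (3) if τ_z > 0 then there exists p ∈ ℂ \ Ω with Re p = Re z and |z − p| ≤ 1/2. -/
open Set Filter Complex MeasureTheory

noncomputable section

/-- The open unit disc in `ℂ`. -/
def unitDisc : Set ℂ := {z : ℂ | ‖z‖ < 1}

/-- A (plane) domain: a nonempty open connected subset of `ℂ`. -/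
def IsPlaneDomain (D : Set ℂ) : Prop := IsOpen D ∧ IsConnected D

/-- A hyperbolic domain: a domain whose complement contains at least two points. -/
def IsHypDomain (D : Set ℂ) : Prop :=
  IsPlaneDomain D ∧ ∃ p q : ℂ, p ∉ D ∧ q ∉ D ∧ p ≠ q

/-- Hyperbolic (Kobayashi) norm of the vector `v` at the point `z` of `D`:
`κ_D(z;v) = inf {|v|/|f'(0)| : f : 𝔻 → D holomorphic, f 0 = z}`. -/
def hypNorm (D : Set ℂ) (z v : ℂ) : ℝ :=
  sInf {r : ℝ | ∃ f : ℂ → ℂ, DifferentiableOn ℂ f unitDisc ∧ Set.MapsTo f unitDisc D ∧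
    f 0 = z ∧ deriv f 0 ≠ 0 ∧ r = ‖v‖ / ‖deriv f 0‖}

/-- Hyperbolic length of the curve `γ` on `[s,t]` in `D`. -/
def hypLength (D : Set ℂ) (γ : ℝ → ℂ) (s t : ℝ) : ℝ :=
  ∫ τ in s..t, hypNorm D (γ τ) (deriv γ τ)

/-- Piecewise `C¹`: continuous on `[a,b]` and differentiable off a finite set. -/
def PiecewiseC1On (γ : ℝ → ℂ) (a b : ℝ) : Prop :=
  ContinuousOn γ (Set.Icc a b) ∧
    ∃ S : Finset ℝ, ∀ x ∈ Set.Icc a b, x ∉ S → DifferentiableAt ℝ γ x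

/-- The hyperbolic distance `k_D(z,w)` in `D`: infimum of hyperbolic lengths of piecewise `C¹`
curves in `D` joining `z` to `w`. -/
def hypDist (D : Set ℂ) (z w : ℂ) : ℝ :=
  sInf {r : ℝ | ∃ γ : ℝ → ℂ, PiecewiseC1On γ 0 1 ∧ (∀ τ ∈ Set.Icc (0:ℝ) 1, γ τ ∈ D) ∧
    γ 0 = z ∧ γ 1 = w ∧ r = hypLength D γ 0 1}

/-- The hyperbolic distance from a point to a set. -/
def hypDistSet (D : Set ℂ) (z : ℂ) (S : Set ℂ) : ℝ :=
  sInf {r : ℝ | ∃ w ∈ S, r = hypDist D z w}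

/-- The hyperbolic ball `B_D(z,R)`. -/
def hypBall (D : Set ℂ) (z : ℂ) (R : ℝ) : Set ℂ := {w ∈ D | hypDist D z w < R}

/-- Absolutely continuous curve on a set (fundamental theorem of calculus characterization). -/
def ACOn (γ : ℝ → ℂ) (I : Set ℝ) : Prop :=
  ContinuousOn γ I ∧ ∀ a ∈ I, ∀ b ∈ I, a ≤ b → γ b - γ a = ∫ τ in a..b, deriv γ τ

/-- A geodesic of `D` defined on `I`. -/
def IsGeodesicOn (D : Set ℂ) (γ : ℝ → ℂ) (I : Set ℝ) : Prop :=
  ACOn γ I ∧ (∀ t ∈ I, γ t ∈ D) ∧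
    ∀ s ∈ I, ∀ t ∈ I, s ≤ t → hypLength D γ s t = hypDist D (γ s) (γ t)

/-- An `(A,B)`-quasi-geodesic of `D` defined on `I`. -/
def IsQuasiGeodesicOn (D : Set ℂ) (γ : ℝ → ℂ) (I : Set ℝ) : Prop :=
  ∃ A B : ℝ, 1 ≤ A ∧ 0 ≤ B ∧ ACOn γ I ∧ (∀ t ∈ I, γ t ∈ D) ∧
    ∀ s ∈ I, ∀ t ∈ I, s ≤ t → hypLength D γ s t ≤ A * hypDist D (γ s) (γ t) + B

/-- Gromov hyperbolicity of `(D, k_D)` via the Rips thin-triangles condition. -/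
def IsGromovHyperbolic (D : Set ℂ) : Prop :=
  IsHypDomain D ∧ ∃ G : ℝ, 0 < G ∧
    ∀ γ₁ γ₂ γ₃ : ℝ → ℂ,
      IsGeodesicOn D γ₁ (Set.Icc 0 1) → IsGeodesicOn D γ₂ (Set.Icc 0 1) →
      IsGeodesicOn D γ₃ (Set.Icc 0 1) →
      γ₁ 0 = γ₂ 0 → γ₁ 1 = γ₃ 0 → γ₂ 1 = γ₃ 1 →
      (∀ t ∈ Set.Icc (0:ℝ) 1,
          hypDistSet D (γ₁ t) (γ₂ '' Set.Icc 0 1 ∪ γ₃ '' Set.Icc 0 1) ≤ G) ∧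
      (∀ t ∈ Set.Icc (0:ℝ) 1,
          hypDistSet D (γ₂ t) (γ₁ '' Set.Icc 0 1 ∪ γ₃ '' Set.Icc 0 1) ≤ G) ∧
      (∀ t ∈ Set.Icc (0:ℝ) 1,
          hypDistSet D (γ₃ t) (γ₁ '' Set.Icc 0 1 ∪ γ₂ '' Set.Icc 0 1) ≤ G)

/-- A domain is asymptotically starlike at infinity if `Ω + i ⊆ Ω` and
`⋃ₙ (Ω - in) = (a,b) × ℝ` for some `-∞ ≤ a < b ≤ +∞`. -/
def AsympStarlike (Ω : Set ℂ) : Prop :=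
  (∀ z ∈ Ω, z + Complex.I ∈ Ω) ∧
  ∃ a b : EReal, a < b ∧
    (⋃ n : ℕ, (fun z => z - (n : ℂ) * Complex.I) '' Ω) =
      {z : ℂ | a < (z.re : EReal) ∧ (z.re : EReal) < b}

/-- Asymptotically starlike at infinity of parabolic type: `a = -∞` or `b = +∞`. -/
def AsympStarlikeParabolic (Ω : Set ℂ) : Prop :=
  (∀ z ∈ Ω, z + Complex.I ∈ Ω) ∧
  ∃ a b : EReal, a < b ∧ (a = ⊥ ∨ b = ⊤) ∧
    (⋃ n : ℕ, (fun z => z - (n : ℂ) * Complex.I) '' Ω) =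
      {z : ℂ | a < (z.re : EReal) ∧ (z.re : EReal) < b}

/-- `τ_z = inf {s ∈ ℝ : z + ir ∈ Ω for all r > s}`, computed in `EReal`. -/
def tauZ (Ω : Set ℂ) (z : ℂ) : EReal :=
  sInf {s : EReal | ∃ x : ℝ, s = (x : EReal) ∧ ∀ r : ℝ, x < r → z + (r : ℂ) * Complex.I ∈ Ω}

/-- The starlike-fication `Ω* = {z ∈ Ω : τ_z < 0}`. -/
def starlikefication (Ω : Set ℂ) : Set ℂ := {z ∈ Ω | tauZ Ω z < 0}

/-- The Euclidean distance to the complement, `δ_Ω`. -/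
def deltaO (Ω : Set ℂ) (z : ℂ) : ℝ := Metric.infDist z Ωᶜ

/-- `Ω_r = {z ∈ Ω : δ_Ω(z) > r}`. -/
def interiorAtScale (Ω : Set ℂ) (r : ℝ) : Set ℂ := {z ∈ Ω | r < deltaO Ω z}

/-- `δ⁺_{Ω,p}(t) = min {t, inf{|z - (p+it)| : Re z ≥ Re p, z ∉ Ω}}` (the inner infimum being
`+∞` when the set is empty). -/
def deltaPlus (Ω : Set ℂ) (p : ℂ) (t : ℝ) : ℝ :=
  (min (ENNReal.ofReal t)
    (EMetric.infEdist (p + (t : ℂ) * Complex.I) {z : ℂ | p.re ≤ z.re ∧ z ∉ Ω})).toReal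

/-- `δ⁻_{Ω,p}(t) = min {t, inf{|z - (p+it)| : Re z ≤ Re p, z ∉ Ω}}`. -/
def deltaMinus (Ω : Set ℂ) (p : ℂ) (t : ℝ) : ℝ :=
  (min (ENNReal.ofReal t)
    (EMetric.infEdist (p + (t : ℂ) * Complex.I) {z : ℂ | z.re ≤ p.re ∧ z ∉ Ω})).toReal

/-- Non-tangential convergence of a sequence of the unit disc to a boundary point. -/
def NTSeqConv (z : ℕ → ℂ) (τ : ℂ) : Prop :=
  Tendsto z atTop (nhds τ) ∧
    ∃ M : ℝ, ∀ n : ℕ, ‖τ - z n‖ ≤ M * (1 - ‖z n‖)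

/-- Non-tangential limit `∠lim_{z→σ} g(z) = L` at a boundary point `σ` of the unit disc:
the limit holds along every Stolz region at `σ`. -/
def NTLim (g : ℂ → ℂ) (σ L : ℂ) : Prop :=
  ∀ M : ℝ, 0 < M →
    Tendsto g (nhdsWithin σ
      {z : ℂ | ‖z‖ < 1 ∧ ‖σ - z‖ ≤ M * (1 - ‖z‖)}) (nhds L)

/-- `τ` is the Denjoy–Wolff point of `g`. -/
def IsDW (g : ℂ → ℂ) (τ : ℂ) : Prop :=
  ‖τ‖ = 1 ∧
    TendstoLocallyUniformlyOn (fun n z => g^[n] z) (fun _ => τ) atTop unitDisc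

/-- Boundary regular fixed points with multiplier `A`. -/
def FixA (g : ℂ → ℂ) (A : ℝ) : Set ℂ :=
  {σ : ℂ | ‖σ‖ = 1 ∧ NTLim g σ σ ∧ NTLim (deriv g) σ (A : ℂ)}

/-- A univalent self-map of the unit disc. -/
def UnivalentSelfMap (f : ℂ → ℂ) : Prop :=
  DifferentiableOn ℂ f unitDisc ∧ Set.InjOn f unitDisc ∧ Set.MapsTo f unitDisc unitDisc

/-- Admissible base domains for the non-elliptic canonical model: a vertical strip,
a half-plane, or `ℂ`. -/
def IsKoenigsBase (Λ : Set ℂ) : Prop :=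
  (∃ a : ℝ, 0 < a ∧ Λ = {w : ℂ | 0 < w.re ∧ w.re < a}) ∨
  Λ = {w : ℂ | 0 < w.re} ∨ Λ = {w : ℂ | w.re < 0} ∨ Λ = Set.univ

/-- `h` is the Koenigs function of the non-elliptic univalent self-map `f`. -/
def IsKoenigsNonElliptic (f h : ℂ → ℂ) : Prop :=
  DifferentiableOn ℂ h unitDisc ∧ Set.InjOn h unitDisc ∧
  (∀ z ∈ unitDisc, h (f z) = h z + Complex.I) ∧
  IsKoenigsBase (⋃ n : ℕ, (fun w => w - (n : ℂ) * Complex.I) '' (h '' unitDisc))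

/-- `h` is the Koenigs function of the elliptic univalent self-map `f` with fixed point `z₀`
and `f'(z₀) = e^{-μ}`. -/
def IsKoenigsElliptic (f h : ℂ → ℂ) (z₀ μ : ℂ) : Prop :=
  z₀ ∈ unitDisc ∧ f z₀ = z₀ ∧ 0 ≤ μ.re ∧ deriv f z₀ = Complex.exp (-μ) ∧
  DifferentiableOn ℂ h unitDisc ∧ Set.InjOn h unitDisc ∧ h z₀ = 0 ∧
  ∀ z ∈ unitDisc, h (f z) = Complex.exp (-μ) * h z

/-- A Riemann map of the unit disc onto `S`. -/
def RiemannMapOnto (g : ℂ → ℂ) (S : Set ℂ) : Prop :=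
  DifferentiableOn ℂ g unitDisc ∧ Set.InjOn g unitDisc ∧ g '' unitDisc = S

/-- The μ-spirallike-fication of a domain. -/
def spirallikefication (μ : ℂ) (Ω : Set ℂ) : Set ℂ :=
  {z ∈ Ω | ∀ t : ℝ, 0 ≤ t → Complex.exp (-μ * t) * z ∈ Ω}

/-- `(φ_t)` is the semigroup-fication of the non-elliptic univalent self-map `f`:
`φ_t = (h*)⁻¹ ∘ (h* + it)` where `h*` is a Riemann map onto the starlike-fication of the
Koenigs domain of `f`. -/
def IsSemigroupficationNE (f : ℂ → ℂ) (φ : ℝ → ℂ → ℂ) : Prop :=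
  ∃ h hstar : ℂ → ℂ, IsKoenigsNonElliptic f h ∧
    RiemannMapOnto hstar (starlikefication (h '' unitDisc)) ∧
    ∀ t : ℝ, 0 ≤ t → ∀ z ∈ unitDisc,
      φ t z ∈ unitDisc ∧ hstar (φ t z) = hstar z + (t : ℂ) * Complex.I

/-- `(φ_t)` is the semigroup-fication of the elliptic univalent self-map `f`. -/
def IsSemigroupficationE (f : ℂ → ℂ) (φ : ℝ → ℂ → ℂ) : Prop :=
  ∃ h hstar : ℂ → ℂ, ∃ z₀ μ : ℂ, IsKoenigsElliptic f h z₀ μ ∧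
    RiemannMapOnto hstar (spirallikefication μ (h '' unitDisc)) ∧ hstar z₀ = 0 ∧
    ∀ t : ℝ, 0 ≤ t → ∀ z ∈ unitDisc,
      φ t z ∈ unitDisc ∧ hstar (φ t z) = Complex.exp (-μ * t) * hstar z

/-- `(φ_t)` is the semigroup-fication of the univalent self-map `f`. -/
def IsSemigroupfication (f : ℂ → ℂ) (φ : ℝ → ℂ → ℂ) : Prop :=
  IsSemigroupficationNE f φ ∨ IsSemigroupficationE f φ

/-- Elliptic self-map: has a fixed point in the unit disc. -/
def IsEllipticMap (f : ℂ → ℂ) : Prop := ∃ z₀ ∈ unitDisc, f z₀ = z₀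

/-- Hyperbolic self-map: non-elliptic with dilation coefficient `α < 1` at the
Denjoy–Wolff point. -/
def IsHyperbolicMap (f : ℂ → ℂ) : Prop :=
  ∃ τ : ℂ, IsDW f τ ∧ ∃ α : ℝ, 0 < α ∧ α < 1 ∧ NTLim (deriv f) τ (α : ℂ)

/-- Parabolic self-map: non-elliptic with dilation coefficient `1` at the Denjoy–Wolff point. -/
def IsParabolicMap (f : ℂ → ℂ) : Prop :=
  ∃ τ : ℂ, IsDW f τ ∧ NTLim (deriv f) τ 1

/-- Zero hyperbolic step. -/
def HasZeroHypStep (f : ℂ → ℂ) : Prop :=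
  ∀ z ∈ unitDisc, ∀ w ∈ unitDisc,
    Tendsto (fun n => hypDist unitDisc (f^[n] z) (f^[n] w)) atTop (nhds 0)

/-- Parabolic of zero hyperbolic step. -/
def IsParabolicZeroStep (f : ℂ → ℂ) : Prop := IsParabolicMap f ∧ HasZeroHypStep f

/-- Parabolic of positive hyperbolic step. -/
def IsParabolicPosStep (f : ℂ → ℂ) : Prop := IsParabolicMap f ∧ ¬ HasZeroHypStep f

/-- The curve `σ(t) = (δ⁺_{Ω*,0}(t) - δ⁻_{Ω*,0}(t))/2 + it`. -/
def sigmaCurve (Ω : Set ℂ) (t : ℝ) : ℂ :=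
  (((deltaPlus (starlikefication Ω) 0 t - deltaMinus (starlikefication Ω) 0 t) / 2 : ℝ) : ℂ) +
    (t : ℂ) * Complex.I

/-- If the half-unit vertical segment around `z` lies in `Ω` and `Ω + i ⊆ Ω`, then the whole
upward ray from `z - i/2` lies in `Ω`. -/
lemma vert_up_aux (Ω : Set ℂ) (hup : ∀ w ∈ Ω, w + Complex.I ∈ Ω) (z : ℂ)
    (h : ∀ s : ℝ, |s| ≤ 1 / 2 → z + (s : ℂ) * Complex.I ∈ Ω) :
    ∀ r : ℝ, -(1 / 2) ≤ r → z + (r : ℂ) * Complex.I ∈ Ω := by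
  have key : ∀ n : ℕ, ∀ r : ℝ, |r - n| ≤ 1 / 2 → z + (r : ℂ) * Complex.I ∈ Ω := by
    intro n
    induction n with
    | zero => intro r hr; exact h r (by simpa using hr)
    | succ n ih =>
      intro r hr
      have h1 : z + ((r - 1 : ℝ) : ℂ) * Complex.I ∈ Ω := by
        apply ih
        have : r - 1 - (n : ℝ) = r - ((n : ℝ) + 1) := by ring
        rw [this]
        simpa [Nat.cast_succ] using hr
      have h2 := hup _ h1
      have : z + (r : ℂ) * Complex.I = z + ((r - 1 : ℝ) : ℂ) * Complex.I + Complex.I := by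
        push_cast; ring
      rw [this]; exact h2
  intro r hr
  have h0 : (0 : ℤ) ≤ ⌊r + 1 / 2⌋ := by
    apply Int.le_floor.mpr; push_cast; linarith
  have hn : ((⌊r + 1 / 2⌋.toNat : ℕ) : ℝ) = (⌊r + 1 / 2⌋ : ℝ) := by
    exact_mod_cast congrArg (Int.cast : ℤ → ℝ) (Int.toNat_of_nonneg h0)
  apply key ⌊r + 1 / 2⌋.toNat
  have hf1 := Int.floor_le (r + 1 / 2)
  have hf2 := Int.lt_floor_add_one (r + 1 / 2)
  rw [abs_le, hn]
  constructor <;> linarith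

/-- Under the segment hypothesis, `τ_z ≤ -1/2`. -/
lemma tau_le_neg_half (Ω : Set ℂ) (hup : ∀ w ∈ Ω, w + Complex.I ∈ Ω) (z : ℂ)
    (h : ∀ s : ℝ, |s| ≤ 1 / 2 → z + (s : ℂ) * Complex.I ∈ Ω) :
    tauZ Ω z ≤ ((-(1 / 2) : ℝ) : EReal) := by
  apply sInf_le
  exact ⟨-(1 / 2), rfl, fun r hr => vert_up_aux Ω hup z h r hr.le⟩

/-- **Lemma.** Let `Ω ⊊ ℂ` be a domain asymptotically starlike at infinity and `z ∈ Ω`.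
Then (1) `τ_z ≠ 0`; (2) if `δ_Ω(z) > 1/2` then `τ_z < 0`; (3) if `τ_z > 0` then there exists
`p ∉ Ω` with `Re p = Re z` and `|z - p| ≤ 1/2`. -/
theorem tau_properties
    (Ω : Set ℂ) (hdom : IsPlaneDomain Ω) (hne : Ω ≠ Set.univ)
    (hAS : AsympStarlike Ω) (z : ℂ) (hz : z ∈ Ω) :
    tauZ Ω z ≠ 0 ∧
    (1 / 2 < deltaO Ω z → tauZ Ω z < 0) ∧
    (0 < tauZ Ω z →
      ∃ p : ℂ, p ∉ Ω ∧ p.re = z.re ∧ ‖z - p‖ ≤ 1 / 2) := by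
  obtain ⟨hopen, -⟩ := hdom
  obtain ⟨hup, -⟩ := hAS
  have hdist : ∀ s : ℝ, dist (z + (s : ℂ) * Complex.I) z = |s| := by
    intro s
    rw [Complex.dist_eq]
    simp [add_sub_cancel_left, map_mul]
  refine ⟨?_, ?_, ?_⟩
  · -- (1) τ_z ≠ 0
    intro h0
    obtain ⟨ε, hε, hball⟩ := Metric.isOpen_iff.mp hopen z hz
    have hlt : tauZ Ω z < ((ε : ℝ) : EReal) := by
      rw [h0]; exact_mod_cast hε
    obtain ⟨s, hs, hslt⟩ := sInf_lt_iff.mp hlt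
    obtain ⟨x, rfl, hx⟩ := hs
    have hxε : x < ε := by exact_mod_cast hslt
    have hmem : ((-(ε / 2) : ℝ) : EReal) ∈
        {s : EReal | ∃ x : ℝ, s = (x : EReal) ∧
          ∀ r : ℝ, x < r → z + (r : ℂ) * Complex.I ∈ Ω} := by
      refine ⟨-(ε / 2), rfl, fun r hr => ?_⟩
      by_cases hrε : ε ≤ r
      · exact hx r (lt_of_lt_of_le hxε hrε)
      · apply hball
        rw [Metric.mem_ball, hdist]
        rw [abs_lt]
        constructor <;> linarith
    have hle : tauZ Ω z ≤ ((-(ε / 2) : ℝ) : EReal) := sInf_le hmem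
    rw [h0] at hle
    have : (0 : ℝ) ≤ -(ε / 2) := by exact_mod_cast hle
    linarith
  · -- (2)
    intro hd
    have hseg : ∀ s : ℝ, |s| ≤ 1 / 2 → z + (s : ℂ) * Complex.I ∈ Ω := by
      intro s hs
      by_contra hc
      have h1 : deltaO Ω z ≤ dist z (z + (s : ℂ) * Complex.I) :=
        Metric.infDist_le_dist_of_mem hc
      rw [dist_comm, hdist] at h1
      linarith
    have := tau_le_neg_half Ω hup z hseg
    refine lt_of_le_of_lt this ?_
    exact_mod_cast (by norm_num : (-(1 / 2) : ℝ) < 0)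
  · -- (3)
    intro ht
    by_contra hc
    push_neg at hc
    have hseg : ∀ s : ℝ, |s| ≤ 1 / 2 → z + (s : ℂ) * Complex.I ∈ Ω := by
      intro s hs
      by_contra hc2
      have h1 := hc _ hc2 (by simp)
      have h2 : ‖z - (z + (s : ℂ) * Complex.I)‖ = |s| := by
        rw [← Complex.dist_eq, dist_comm, hdist]
      rw [h2] at h1
      linarith
    have hle := tau_le_neg_half Ω hup z hseg
    have : tauZ Ω z < 0 := by
      refine lt_of_le_of_lt hle ?_
      exact_mod_cast (by norm_num : (-(1 / 2) : ℝ) < 0)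
    exact absurd ht (not_lt.mpr this.le)
end
end

section
/- Let Ω ⊊ ℂ be a domain asymptotically starlike at infinity and let Ω* := {z ∈ Ω : τ_z < 0} be its starlike-fication. Then Ω* is a non-empty, open, connected, simply connected subset of Ω which is starlike at infinity (Ω* + it ⊆ Ω* for all t ≥ 0), and ⋃_{n∈ℕ}(Ω − in) = ⋃_{t≥0}(Ω* − it). -/
open Set Filter Complex MeasureTheory

noncomputable section

namespace StarlikeficationAux

/-- Membership in the starlike-fication, unfolded. -/
lemma mem_star_iff (Ω : Set ℂ) (z : ℂ) :
    z ∈ starlikefication Ω ↔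
      ∃ x : ℝ, x < 0 ∧ ∀ r : ℝ, x < r → z + (r : ℂ) * Complex.I ∈ Ω := by
  constructor
  · rintro ⟨hz, hτ⟩
    unfold tauZ at hτ
    obtain ⟨s, hs, hs0⟩ := sInf_lt_iff.mp hτ
    obtain ⟨x, rfl, hx⟩ := hs
    refine ⟨x, ?_, hx⟩
    exact_mod_cast hs0
  · rintro ⟨x, hx0, hx⟩
    have hzΩ : z ∈ Ω := by simpa using hx 0 hx0
    refine ⟨hzΩ, ?_⟩
    show tauZ Ω z < 0
    unfold tauZ
    exact sInf_lt_iff.mpr ⟨(x : EReal), ⟨x, rfl, hx⟩, by exact_mod_cast hx0⟩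

/-- The starlike-fication is closed under adding `it`, `t ≥ 0`. -/
lemma star_up (Ω : Set ℂ) {z : ℂ} (hz : z ∈ starlikefication Ω) {t : ℝ} (ht : 0 ≤ t) :
    z + (t : ℂ) * Complex.I ∈ starlikefication Ω := by
  rw [mem_star_iff] at hz ⊢
  obtain ⟨x, hx0, hx⟩ := hz
  refine ⟨x, hx0, fun r hr => ?_⟩
  have heq : z + (t : ℂ) * Complex.I + (r : ℂ) * Complex.I
      = z + ((t + r : ℝ) : ℂ) * Complex.I := by push_cast; ring
  rw [heq]
  exact hx _ (by linarith)

/-- If a unit vertical segment starting at height `c` is in `Ω`, the whole upward ray is. -/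
lemma ray_of_seg {Ω : Set ℂ} (hup : ∀ z ∈ Ω, z + Complex.I ∈ Ω) (z : ℂ) (c : ℝ)
    (h : ∀ r : ℝ, c ≤ r → r ≤ c + 1 → z + (r : ℂ) * Complex.I ∈ Ω) :
    ∀ r : ℝ, c ≤ r → z + (r : ℂ) * Complex.I ∈ Ω := by
  have key : ∀ n : ℕ, ∀ r : ℝ, c + n ≤ r → r ≤ c + n + 1 → z + (r : ℂ) * Complex.I ∈ Ω := by
    intro n
    induction n with
    | zero => intro r h1 h2; exact h r (by simpa using h1) (by push_cast at h2; linarith)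
    | succ m ih =>
      intro r h1 h2
      have hmem := ih (r - 1) (by push_cast at h1 ⊢; linarith) (by push_cast at h2 ⊢; linarith)
      have hmem2 := hup _ hmem
      have heq : z + ((r - 1 : ℝ) : ℂ) * Complex.I + Complex.I
          = z + (r : ℂ) * Complex.I := by push_cast; ring
      rwa [heq] at hmem2
  intro r hr
  have h0 : (0 : ℝ) ≤ r - c := by linarith
  have h1 : ((⌊r - c⌋₊ : ℕ) : ℝ) ≤ r - c := Nat.floor_le h0
  have h2 : r - c < (⌊r - c⌋₊ : ℕ) + 1 := Nat.lt_floor_add_one _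
  exact key ⌊r - c⌋₊ r (by linarith) (by linarith)

/-- The starlike-fication of an open `Ω` with `Ω + i ⊆ Ω` is open. -/
lemma star_open {Ω : Set ℂ} (hΩ : IsOpen Ω) (hup : ∀ z ∈ Ω, z + Complex.I ∈ Ω) :
    IsOpen (starlikefication Ω) := by
  rw [Metric.isOpen_iff]
  intro z hz
  rw [mem_star_iff] at hz
  obtain ⟨x, hx0, hx⟩ := hz
  have hcx : x < x / 2 := by linarith
  have hc0 : x / 2 < 0 := by linarith
  have hK : IsCompact ((fun r : ℝ => z + (r : ℂ) * Complex.I) '' Set.Icc (x / 2) (x / 2 + 1)) :=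
    isCompact_Icc.image (by continuity)
  have hKsub : (fun r : ℝ => z + (r : ℂ) * Complex.I) '' Set.Icc (x / 2) (x / 2 + 1) ⊆ Ω := by
    rintro _ ⟨r, hr, rfl⟩
    exact hx r (lt_of_lt_of_le hcx hr.1)
  obtain ⟨ε, hε, hthick⟩ := hK.exists_thickening_subset_open hΩ hKsub
  refine ⟨ε, hε, fun w hw => ?_⟩
  rw [mem_star_iff]
  refine ⟨x / 2, hc0, fun r hr => ?_⟩
  refine ray_of_seg hup w (x / 2) ?_ r (le_of_lt hr)
  intro ρ h1 h2
  apply hthick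
  rw [Metric.mem_thickening_iff]
  refine ⟨z + (ρ : ℂ) * Complex.I, ⟨ρ, ⟨h1, h2⟩, rfl⟩, ?_⟩
  simpa [dist_add_right] using Metric.mem_ball.mp hw

/-- `Ω` is contained in the strip. -/
lemma omega_subset_strip {Ω : Set ℂ} {a b : EReal}
    (hstrip : (⋃ n : ℕ, (fun z => z - (n : ℂ) * Complex.I) '' Ω) =
      {z : ℂ | a < (z.re : EReal) ∧ (z.re : EReal) < b}) :
    ∀ z ∈ Ω, a < (z.re : EReal) ∧ (z.re : EReal) < b := by
  intro z hz
  have hmem : z ∈ ⋃ n : ℕ, (fun z => z - (n : ℂ) * Complex.I) '' Ω :=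
    Set.mem_iUnion.mpr ⟨0, ⟨z, hz, by simp⟩⟩
  rw [hstrip] at hmem
  exact hmem

/-- Key one-dimensional lemma: each vertical line over the strip is eventually in `Ω`. -/
lemma line_ray {Ω : Set ℂ} (hΩ : IsOpen Ω) (hup : ∀ z ∈ Ω, z + Complex.I ∈ Ω)
    {a b : EReal}
    (hstrip : (⋃ n : ℕ, (fun z => z - (n : ℂ) * Complex.I) '' Ω) =
      {z : ℂ | a < (z.re : EReal) ∧ (z.re : EReal) < b})
    {x₀ : ℝ} (ha : a < (x₀ : EReal)) (hb : (x₀ : EReal) < b) :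
    ∃ α : ℝ, ∀ s : ℝ, α ≤ s → (x₀ : ℂ) + (s : ℂ) * Complex.I ∈ Ω := by
  by_contra hcon
  push_neg at hcon
  have bad_down : ∀ s : ℝ, ((x₀ : ℂ) + (s : ℂ) * Complex.I ∉ Ω) →
      ∀ k : ℕ, (x₀ : ℂ) + ((s - k : ℝ) : ℂ) * Complex.I ∉ Ω := by
    intro s hs k
    induction k with
    | zero => simpa using hs
    | succ m ih =>
      intro hmem
      apply ih
      have hmem2 := hup _ hmem
      have heq : (x₀ : ℂ) + ((s - (m + 1 : ℕ) : ℝ) : ℂ) * Complex.I + Complex.I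
          = (x₀ : ℂ) + ((s - (m : ℕ) : ℝ) : ℂ) * Complex.I := by push_cast; ring
      rwa [heq] at hmem2
  choose sfun hs1 hs2 using fun n : ℕ => hcon n
  set u : ℕ → ℝ := fun n => sfun n - ⌊sfun n⌋₊ with hu
  have hu01 : ∀ n, u n ∈ Set.Icc (0 : ℝ) 1 := by
    intro n
    have h0 : (0 : ℝ) ≤ sfun n := le_trans (Nat.cast_nonneg n) (hs1 n)
    constructor
    · have := Nat.floor_le h0
      simp only [hu]
      linarith
    · have := Nat.lt_floor_add_one (sfun n)
      simp only [hu]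
      linarith
  have hbadu : ∀ n : ℕ, (x₀ : ℂ) + ((u n + n : ℝ) : ℂ) * Complex.I ∉ Ω := by
    intro n
    have hfl : n ≤ ⌊sfun n⌋₊ := Nat.le_floor (hs1 n)
    have hbd := bad_down (sfun n) (hs2 n) (⌊sfun n⌋₊ - n)
    have hcast : sfun n - ((⌊sfun n⌋₊ - n : ℕ) : ℝ) = u n + n := by
      have hc : ((⌊sfun n⌋₊ - n : ℕ) : ℝ) = (⌊sfun n⌋₊ : ℝ) - n := by
        push_cast [hfl]; ring
      rw [hc, hu]; ring
    rwa [hcast] at hbd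
  obtain ⟨l, _, φ, hφ, hlim⟩ :=
    (isCompact_Icc : IsCompact (Set.Icc (0 : ℝ) 1)).tendsto_subseq hu01
  have hbadlim : ∀ m : ℕ, (x₀ : ℂ) + ((l + m : ℝ) : ℂ) * Complex.I ∉ Ω := by
    intro m
    have hcl : IsClosed Ωᶜ := hΩ.isClosed_compl
    have htend : Tendsto (fun j => (x₀ : ℂ) + ((u (φ j) + m : ℝ) : ℂ) * Complex.I) atTop
        (nhds ((x₀ : ℂ) + ((l + m : ℝ) : ℂ) * Complex.I)) := by
      apply Tendsto.add tendsto_const_nhds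
      apply Tendsto.mul_const
      exact (Complex.continuous_ofReal.tendsto _).comp (hlim.add_const (m : ℝ))
    have hev : ∀ᶠ j in atTop, (x₀ : ℂ) + ((u (φ j) + m : ℝ) : ℂ) * Complex.I ∈ Ωᶜ := by
      filter_upwards [eventually_ge_atTop m] with j hj
      have hjm : m ≤ φ j := le_trans hj hφ.le_apply
      have h2 := bad_down (u (φ j) + φ j) (hbadu (φ j)) (φ j - m)
      have hcast : (u (φ j) + (φ j : ℕ)) - ((φ j - m : ℕ) : ℝ) = u (φ j) + m := by
        push_cast [hjm]; ring
      rw [hcast] at h2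
      exact h2
    exact hcl.mem_of_tendsto htend hev
  have hmem : (x₀ : ℂ) + (l : ℂ) * Complex.I ∈
      {z : ℂ | a < (z.re : EReal) ∧ (z.re : EReal) < b} := by
    constructor <;> simp [ha, hb]
  rw [← hstrip] at hmem
  simp only [Set.mem_iUnion, Set.mem_image] at hmem
  obtain ⟨n, w, hwΩ, hweq⟩ := hmem
  apply hbadlim n
  have hw : (x₀ : ℂ) + ((l + n : ℝ) : ℂ) * Complex.I = w := by
    push_cast at hweq ⊢
    linear_combination -hweq
  rw [hw]
  exact hwΩ

/-- Every vertical line over the strip meets the starlike-fication. -/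
lemma star_slice {Ω : Set ℂ} (hΩ : IsOpen Ω) (hup : ∀ z ∈ Ω, z + Complex.I ∈ Ω)
    {a b : EReal}
    (hstrip : (⋃ n : ℕ, (fun z => z - (n : ℂ) * Complex.I) '' Ω) =
      {z : ℂ | a < (z.re : EReal) ∧ (z.re : EReal) < b})
    {x₀ : ℝ} (ha : a < (x₀ : EReal)) (hb : (x₀ : EReal) < b) :
    ∃ z ∈ starlikefication Ω, z.re = x₀ := by
  obtain ⟨α, hα⟩ := line_ray hΩ hup hstrip ha hb
  refine ⟨(x₀ : ℂ) + ((α + 1 : ℝ) : ℂ) * Complex.I, ?_, by simp⟩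
  rw [mem_star_iff]
  refine ⟨-1, by norm_num, fun r hr => ?_⟩
  have heq : (x₀ : ℂ) + ((α + 1 : ℝ) : ℂ) * Complex.I + (r : ℂ) * Complex.I
      = (x₀ : ℂ) + ((α + 1 + r : ℝ) : ℂ) * Complex.I := by push_cast; ring
  rw [heq]
  exact hα _ (by linarith)

/-- The main topological result: the starlike-fication is contractible. -/
lemma star_contractible {Ω : Set ℂ} {a b : EReal} (hab : a < b) (hΩ : IsOpen Ω)
    (hup : ∀ z ∈ Ω, z + Complex.I ∈ Ω)
    (hstrip : (⋃ n : ℕ, (fun z => z - (n : ℂ) * Complex.I) '' Ω) =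
      {z : ℂ | a < (z.re : EReal) ∧ (z.re : EReal) < b}) :
    ContractibleSpace ↥(starlikefication Ω) := by
  set O := starlikefication Ω with hOdef
  have hOopen : IsOpen O := star_open hΩ hup
  have hOup : ∀ z ∈ O, ∀ t : ℝ, 0 ≤ t → z + (t : ℂ) * Complex.I ∈ O :=
    fun z hz t ht => star_up Ω hz ht
  have hupline : ∀ x t t' : ℝ, t ≤ t' →
      (x : ℂ) + (t : ℂ) * Complex.I ∈ O → (x : ℂ) + (t' : ℂ) * Complex.I ∈ O := by
    intro x t t' htt hmem
    have h2 := hOup _ hmem (t' - t) (by linarith)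
    have heq : (x : ℂ) + (t : ℂ) * Complex.I + ((t' - t : ℝ) : ℂ) * Complex.I
        = (x : ℂ) + (t' : ℂ) * Complex.I := by push_cast; ring
    rwa [heq] at h2
  have hOstrip : ∀ z ∈ O, a < ((z.re : ℝ) : EReal) ∧ ((z.re : ℝ) : EReal) < b :=
    fun z hz => omega_subset_strip hstrip z hz.1
  set Iab : Set ℝ := {x : ℝ | a < (x : EReal) ∧ (x : EReal) < b} with hIabdef
  have hconv : ∀ s : ℝ, 0 ≤ s → s ≤ 1 → ∀ x ∈ Iab, ∀ y ∈ Iab,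
      ((1 - s) * x + s * y) ∈ Iab := by
    intro s hs0 hs1 x hx y hy
    have h1 : min x y ≤ (1 - s) * x + s * y := by
      rcases le_total x y with h | h
      · have : min x y = x := min_eq_left h
        rw [this]; nlinarith
      · have : min x y = y := min_eq_right h
        rw [this]; nlinarith
    have h2 : (1 - s) * x + s * y ≤ max x y := by
      rcases le_total x y with h | h
      · have : max x y = y := max_eq_right h
        rw [this]; nlinarith
      · have : max x y = x := max_eq_left h
        rw [this]; nlinarith
    constructor
    · have hmin : a < ((min x y : ℝ) : EReal) := by
        rcases min_cases x y with ⟨hm, _⟩ | ⟨hm, _⟩ <;> rw [hm]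
        · exact hx.1
        · exact hy.1
      exact lt_of_lt_of_le hmin (EReal.coe_le_coe_iff.mpr h1)
    · have hmax : ((max x y : ℝ) : EReal) < b := by
        rcases max_cases x y with ⟨hm, _⟩ | ⟨hm, _⟩ <;> rw [hm]
        · exact hx.2
        · exact hy.2
      exact lt_of_le_of_lt (EReal.coe_le_coe_iff.mpr h2) hmax
  -- construct the continuous selection ψ via a partition of unity
  have hcover : ∀ p : ↥Iab, ∃ δ : ℝ, 0 < δ ∧ ∃ M : ℝ, ∀ x : ℝ,
      |x - (p : ℝ)| < δ → (x : ℂ) + (M : ℂ) * Complex.I ∈ O := by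
    intro p
    obtain ⟨z, hzO, hzre⟩ := star_slice hΩ hup hstrip p.2.1 p.2.2
    obtain ⟨δ, hδ, hball⟩ := Metric.isOpen_iff.mp hOopen z hzO
    refine ⟨δ, hδ, z.im, fun x hx => ?_⟩
    apply hball
    rw [Metric.mem_ball]
    have hz' : z = ((p : ℝ) : ℂ) + (z.im : ℂ) * Complex.I := by
      rw [← hzre]; exact (Complex.re_add_im z).symm
    nth_rewrite 2 [hz']
    rw [dist_add_right]
    simpa [Complex.dist_eq, ← Complex.ofReal_sub, Complex.norm_real, Real.norm_eq_abs] using hx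
  choose δf hδf Mf hMf using hcover
  set U : ↥Iab → Set ↥Iab := fun p => Subtype.val ⁻¹' Metric.ball (p : ℝ) (δf p) with hUdef
  have hUo : ∀ p, IsOpen (U p) := fun p => Metric.isOpen_ball.preimage continuous_subtype_val
  have hUc : (Set.univ : Set ↥Iab) ⊆ ⋃ p, U p := fun q _ =>
    Set.mem_iUnion.mpr ⟨q, by simp [hUdef, hδf q]⟩
  obtain ⟨f, hf⟩ := PartitionOfUnity.exists_isSubordinate isClosed_univ U hUo hUc
  set ψ : ↥Iab → ℝ := fun x => ∑ᶠ p, f p x • Mf p with hψdef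
  have hψc : Continuous ψ := f.continuous_finsum_smul fun i x _ => continuousAt_const
  have hψO : ∀ x : ↥Iab, (((x : ℝ) : ℂ)) + ((ψ x : ℝ) : ℂ) * Complex.I ∈ O := by
    intro x
    have hsum : ∑ i ∈ f.finsupport x, f i x = 1 := f.sum_finsupport (Set.mem_univ x)
    have hψeq : ψ x = ∑ i ∈ f.finsupport x, f i x • Mf i :=
      (f.sum_finsupport_smul_eq_finsum (fun i _ => Mf i)).symm
    have hne : (f.finsupport x).Nonempty := by
      by_contra h
      rw [Finset.not_nonempty_iff_eq_empty] at h
      rw [h] at hsum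
      simp at hsum
    obtain ⟨i₀, hi₀mem, hi₀min⟩ := Finset.exists_min_image (f.finsupport x) Mf hne
    have hψge : Mf i₀ ≤ ψ x := by
      rw [hψeq]
      simp only [smul_eq_mul]
      calc Mf i₀ = (∑ i ∈ f.finsupport x, f i x) * Mf i₀ := by rw [hsum, one_mul]
        _ = ∑ i ∈ f.finsupport x, f i x * Mf i₀ := Finset.sum_mul _ _ _
        _ ≤ ∑ i ∈ f.finsupport x, f i x * Mf i := by
            refine Finset.sum_le_sum fun i hi => ?_
            exact mul_le_mul_of_nonneg_left (hi₀min i hi) (f.nonneg i x)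
    have hx_supp : x ∈ Function.support ⇑(f i₀) := by
      have := (f.mem_finsupport x).mp hi₀mem
      simpa using this
    have hx_in : x ∈ U i₀ := hf i₀ (subset_tsupport _ hx_supp)
    have hbase : ((x : ℝ) : ℂ) + ((Mf i₀ : ℝ) : ℂ) * Complex.I ∈ O := by
      apply hMf i₀ (x : ℝ)
      have := hx_in
      simp only [hUdef, Set.mem_preimage, Metric.mem_ball, Real.dist_eq] at this
      exact this
    exact hupline _ _ _ hψge hbase
  -- the base point
  obtain ⟨c, hc1, hc2⟩ := exists_between hab
  have hcbot : c ≠ ⊥ := (bot_le.trans_lt hc1).ne'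
  have hctop : c ≠ ⊤ := (hc2.trans_le le_top).ne
  have hx₀ : c.toReal ∈ Iab := by
    have hco : ((c.toReal : ℝ) : EReal) = c := EReal.coe_toReal hctop hcbot
    exact ⟨hco ▸ hc1, hco ▸ hc2⟩
  set x₀ : ℝ := c.toReal with hx₀def
  set p₀ : ↥Iab := ⟨x₀, hx₀⟩ with hp₀def
  set z₀ : ↥O := ⟨((x₀ : ℝ) : ℂ) + ((ψ p₀ : ℝ) : ℂ) * Complex.I, hψO p₀⟩ with hz₀def
  -- the retraction data
  set ρ : ↥O → ↥Iab := fun z => ⟨(z : ℂ).re, hOstrip z.1 z.2⟩ with hρdef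
  have hρc : Continuous ρ := (Complex.continuous_re.comp continuous_subtype_val).subtype_mk _
  set g : ↥O → ℝ := fun z => max (z : ℂ).im (ψ (ρ z)) with hgdef
  have hgc : Continuous g :=
    (Complex.continuous_im.comp continuous_subtype_val).max (hψc.comp hρc)
  have hmemO : ∀ z : ↥O, (((z : ℂ).re : ℂ)) + (((z : ℂ).im : ℝ) : ℂ) * Complex.I ∈ O := by
    intro z
    rw [Complex.re_add_im]
    exact z.2
  set r₁ : C(↥O, ↥O) :=
    ⟨fun z => ⟨((z : ℂ).re : ℂ) + ((g z : ℝ) : ℂ) * Complex.I,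
        hupline _ _ _ (le_max_left _ _) (hmemO z)⟩, by
      apply Continuous.subtype_mk
      exact (Complex.continuous_ofReal.comp
          (Complex.continuous_re.comp continuous_subtype_val)).add
        ((Complex.continuous_ofReal.comp hgc).mul continuous_const)⟩ with hr₁def
  -- first homotopy : id to r₁ (push up to the graph level)
  have H₁ : (ContinuousMap.id ↥O).Homotopy r₁ := by
    refine ⟨⟨fun p => ⟨((p.2 : ℂ).re : ℂ) +
        (((1 - (p.1 : ℝ)) * (p.2 : ℂ).im + (p.1 : ℝ) * g p.2 : ℝ) : ℂ) * Complex.I, ?_⟩, ?_⟩,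
        ?_, ?_⟩
    · refine hupline _ _ _ ?_ (hmemO p.2)
      have h1 : (p.2 : ℂ).im ≤ g p.2 := le_max_left _ _
      have h2 : (0 : ℝ) ≤ (p.1 : ℝ) := p.1.2.1
      nlinarith
    · apply Continuous.subtype_mk
      have cs : Continuous fun p : unitInterval × ↥O => ((p.1 : ℝ)) :=
        continuous_subtype_val.comp continuous_fst
      have cre : Continuous fun p : unitInterval × ↥O => (p.2 : ℂ).re :=
        Complex.continuous_re.comp (continuous_subtype_val.comp continuous_snd)
      have cim : Continuous fun p : unitInterval × ↥O => (p.2 : ℂ).im :=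
        Complex.continuous_im.comp (continuous_subtype_val.comp continuous_snd)
      have cg : Continuous fun p : unitInterval × ↥O => g p.2 := hgc.comp continuous_snd
      exact (Complex.continuous_ofReal.comp cre).add
        ((Complex.continuous_ofReal.comp
          (((continuous_const.sub cs).mul cim).add (cs.mul cg))).mul continuous_const)
    · intro z
      apply Subtype.ext
      show ((z : ℂ).re : ℂ) +
        (((1 - ((0 : unitInterval) : ℝ)) * (z : ℂ).im + ((0 : unitInterval) : ℝ) * g z : ℝ) : ℂ)
          * Complex.I = (z : ℂ)
      norm_num [Complex.re_add_im]
    · intro z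
      apply Subtype.ext
      show ((z : ℂ).re : ℂ) +
        (((1 - ((1 : unitInterval) : ℝ)) * (z : ℂ).im + ((1 : unitInterval) : ℝ) * g z : ℝ) : ℂ)
          * Complex.I = ((z : ℂ).re : ℂ) + ((g z : ℝ) : ℂ) * Complex.I
      norm_num
  -- second homotopy : r₁ to the constant map at z₀ (slide along the graph)
  have hq : ∀ p : unitInterval × ↥O,
      ((1 - (p.1 : ℝ)) * (p.2 : ℂ).re + (p.1 : ℝ) * x₀) ∈ Iab := fun p =>
    hconv _ p.1.2.1 p.1.2.2 _ (hOstrip p.2.1 p.2.2) _ hx₀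
  have H₂ : r₁.Homotopy (ContinuousMap.const ↥O z₀) := by
    refine ⟨⟨fun p => ⟨((((1 - (p.1 : ℝ)) * (p.2 : ℂ).re + (p.1 : ℝ) * x₀ : ℝ)) : ℂ) +
        ((((1 - (p.1 : ℝ)) * (g p.2 - ψ (ρ p.2)) +
          ψ (⟨_, hq p⟩ : ↥Iab) : ℝ)) : ℂ) * Complex.I, ?_⟩, ?_⟩, ?_, ?_⟩
    · refine hupline _ _ _ ?_ (hψO (⟨_, hq p⟩ : ↥Iab))
      have h1 : ψ (ρ p.2) ≤ g p.2 := le_max_right _ _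
      have h2 : (0 : ℝ) ≤ (p.1 : ℝ) := p.1.2.1
      have h3 : ((p.1 : ℝ)) ≤ 1 := p.1.2.2
      nlinarith
    · apply Continuous.subtype_mk
      have cs : Continuous fun p : unitInterval × ↥O => ((p.1 : ℝ)) :=
        continuous_subtype_val.comp continuous_fst
      have cre : Continuous fun p : unitInterval × ↥O => (p.2 : ℂ).re :=
        Complex.continuous_re.comp (continuous_subtype_val.comp continuous_snd)
      have cg : Continuous fun p : unitInterval × ↥O => g p.2 := hgc.comp continuous_snd
      have cψρ : Continuous fun p : unitInterval × ↥O => ψ (ρ p.2) :=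
        hψc.comp (hρc.comp continuous_snd)
      have cxs : Continuous fun p : unitInterval × ↥O =>
          ((1 - (p.1 : ℝ)) * (p.2 : ℂ).re + (p.1 : ℝ) * x₀) :=
        ((continuous_const.sub cs).mul cre).add (cs.mul continuous_const)
      have cq : Continuous fun p : unitInterval × ↥O => (⟨_, hq p⟩ : ↥Iab) :=
        cxs.subtype_mk _
      have cψq : Continuous fun p : unitInterval × ↥O => ψ (⟨_, hq p⟩ : ↥Iab) := hψc.comp cq
      exact (Complex.continuous_ofReal.comp cxs).add
        ((Complex.continuous_ofReal.comp
          (((continuous_const.sub cs).mul (cg.sub cψρ)).add cψq)).mul continuous_const)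
    · intro z
      apply Subtype.ext
      have harg : (⟨(1 - ((0 : unitInterval) : ℝ)) * (z : ℂ).re + ((0 : unitInterval) : ℝ) * x₀,
          hq ((0 : unitInterval), z)⟩ : ↥Iab) = ρ z := by
        apply Subtype.ext
        show (1 - ((0 : unitInterval) : ℝ)) * (z : ℂ).re + ((0 : unitInterval) : ℝ) * x₀
          = (z : ℂ).re
        norm_num
      show ((((1 - ((0 : unitInterval) : ℝ)) * (z : ℂ).re
            + ((0 : unitInterval) : ℝ) * x₀ : ℝ)) : ℂ) +
          ((((1 - ((0 : unitInterval) : ℝ)) * (g z - ψ (ρ z)) +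
            ψ (⟨_, hq ((0 : unitInterval), z)⟩ : ↥Iab) : ℝ)) : ℂ) * Complex.I
          = ((z : ℂ).re : ℂ) + ((g z : ℝ) : ℂ) * Complex.I
      rw [harg]
      norm_num
    · intro z
      apply Subtype.ext
      have harg : (⟨(1 - ((1 : unitInterval) : ℝ)) * (z : ℂ).re + ((1 : unitInterval) : ℝ) * x₀,
          hq ((1 : unitInterval), z)⟩ : ↥Iab) = p₀ := by
        apply Subtype.ext
        show (1 - ((1 : unitInterval) : ℝ)) * (z : ℂ).re + ((1 : unitInterval) : ℝ) * x₀ = x₀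
        norm_num
      show ((((1 - ((1 : unitInterval) : ℝ)) * (z : ℂ).re
            + ((1 : unitInterval) : ℝ) * x₀ : ℝ)) : ℂ) +
          ((((1 - ((1 : unitInterval) : ℝ)) * (g z - ψ (ρ z)) +
            ψ (⟨_, hq ((1 : unitInterval), z)⟩ : ↥Iab) : ℝ)) : ℂ) * Complex.I
          = ((x₀ : ℝ) : ℂ) + ((ψ p₀ : ℝ) : ℂ) * Complex.I
      rw [harg]
      norm_num
  have hnull : (ContinuousMap.id ↥O).Nullhomotopic := ⟨z₀, ⟨H₁.trans H₂⟩⟩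
  exact (contractible_iff_id_nullhomotopic _).mpr hnull

end StarlikeficationAux

open StarlikeficationAux in
/-- **Lemma.** If `Ω ⊊ ℂ` is a domain asymptotically starlike at infinity, then its
starlike-fication `Ω* = {z ∈ Ω : τ_z < 0}` is a non-empty, open, connected and simply
connected subset of `Ω`, it is starlike at infinity, and
`⋃_{n∈ℕ} (Ω - in) = ⋃_{t≥0} (Ω* - it)`. -/
theorem starlikefication_properties
    (Ω : Set ℂ) (hdom : IsPlaneDomain Ω) (hne : Ω ≠ Set.univ)
    (hAS : AsympStarlike Ω) :
    (starlikefication Ω).Nonempty ∧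
    IsOpen (starlikefication Ω) ∧
    IsConnected (starlikefication Ω) ∧
    SimplyConnectedSpace ↥(starlikefication Ω) ∧
    starlikefication Ω ⊆ Ω ∧
    (∀ t : ℝ, 0 ≤ t → ∀ z ∈ starlikefication Ω,
      z + (t : ℂ) * Complex.I ∈ starlikefication Ω) ∧
    (⋃ n : ℕ, (fun z => z - (n : ℂ) * Complex.I) '' Ω) =
      {w : ℂ | ∃ z ∈ starlikefication Ω, ∃ t : ℝ, 0 ≤ t ∧ w = z - (t : ℂ) * Complex.I} := by
  obtain ⟨hup, a, b, hab, hstrip⟩ := hAS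
  have hΩopen : IsOpen Ω := hdom.1
  -- a real point strictly between a and b
  obtain ⟨c, hc1, hc2⟩ := exists_between hab
  have hcbot : c ≠ ⊥ := (bot_le.trans_lt hc1).ne'
  have hctop : c ≠ ⊤ := (hc2.trans_le le_top).ne
  have hco : ((c.toReal : ℝ) : EReal) = c := EReal.coe_toReal hctop hcbot
  have hnonempty : (starlikefication Ω).Nonempty := by
    obtain ⟨z, hz, _⟩ := star_slice hΩopen hup hstrip (hco ▸ hc1) (hco ▸ hc2)
    exact ⟨z, hz⟩
  have hcontr : ContractibleSpace ↥(starlikefication Ω) :=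
    star_contractible hab hΩopen hup hstrip
  haveI := hcontr
  refine ⟨hnonempty, star_open hΩopen hup, ?_, inferInstance, fun z hz => hz.1,
    fun t ht z hz => star_up Ω hz ht, ?_⟩
  · rw [isConnected_iff_connectedSpace]
    infer_instance
  · ext w
    simp only [Set.mem_iUnion, Set.mem_image, Set.mem_setOf_eq]
    constructor
    · rintro ⟨n, w₀, hw₀, rfl⟩
      have hw₀strip := omega_subset_strip hstrip w₀ hw₀
      have hre : (w₀ - (n : ℂ) * Complex.I).re = w₀.re := by simp
      obtain ⟨α, hα⟩ := line_ray hΩopen hup hstrip hw₀strip.1 hw₀strip.2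
      set w : ℂ := w₀ - (n : ℂ) * Complex.I with hwdef
      set T : ℝ := max 0 (α + 1 - w.im) with hTdef
      have hT0 : 0 ≤ T := le_max_left _ _
      have hT1 : α + 1 - w.im ≤ T := le_max_right _ _
      refine ⟨w + (T : ℂ) * Complex.I, ?_, T, hT0, by ring⟩
      rw [mem_star_iff]
      refine ⟨-1, by norm_num, fun r hr => ?_⟩
      have heq : w + (T : ℂ) * Complex.I + (r : ℂ) * Complex.I
          = (w.re : ℂ) + ((w.im + T + r : ℝ) : ℂ) * Complex.I := by
        conv_lhs => rw [← Complex.re_add_im w]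
        push_cast
        ring
      rw [heq]
      have hwre : w.re = w₀.re := hre
      rw [hwre]
      exact hα _ (by linarith)
    · rintro ⟨z, hz, t, ht, rfl⟩
      rw [mem_star_iff] at hz
      obtain ⟨x, hx0, hx⟩ := hz
      refine ⟨⌈t⌉₊, z + (((⌈t⌉₊ : ℝ) - t : ℝ) : ℂ) * Complex.I, ?_, ?_⟩
      · apply hx
        have := Nat.le_ceil t
        linarith
      · push_cast
        ring
end
end

section
/- Let Ω ⊊ ℂ be a domain asymptotically starlike at infinity of parabolic type such that 0 ∉ Ω and it ∈ Ω for all t > 0. Then for every t > 0, δ^±_{Ω*,0}(t) ≤ δ^±_{Ω,0}(t) ≤ δ^±_{Ω*,0}(t) + 1/2 (for both the + and the − functions). In particular, for the curve σ(t) := (δ⁺_{Ω*,0}(t) − δ⁻_{Ω*,0}(t))/2 + it one has δ_Ω(σ(t)) → +∞ as t → +∞. -/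
open Set Filter Complex MeasureTheory

noncomputable section

section DeltaAux

private lemma memAddNat {Ω : Set ℂ} (hplus : ∀ z ∈ Ω, z + Complex.I ∈ Ω) :
    ∀ (n : ℕ) {z : ℂ}, z ∈ Ω → z + (n : ℂ) * Complex.I ∈ Ω := by
  intro n
  induction n with
  | zero => intro z hz; simpa using hz
  | succ k ih =>
      intro z hz
      have h1 := hplus _ (ih hz)
      have he : z + (k : ℂ) * Complex.I + Complex.I = z + ((k + 1 : ℕ) : ℂ) * Complex.I := by
        push_cast; ring
      rwa [he] at h1

private lemma tau_neg {Ω : Set ℂ} {z : ℂ} {x : ℝ} (hx : x < 0)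
    (h : ∀ r : ℝ, x < r → z + (r : ℂ) * Complex.I ∈ Ω) : tauZ Ω z < 0 := by
  have h1 : tauZ Ω z ≤ (x : EReal) := sInf_le ⟨x, rfl, h⟩
  exact lt_of_le_of_lt h1 (by exact_mod_cast hx)

private lemma exists_near {Ω : Set ℂ} (hplus : ∀ z ∈ Ω, z + Complex.I ∈ Ω)
    {z : ℂ} (hz : z ∉ starlikefication Ω) :
    ∃ r : ℝ, |r| ≤ 1 / 2 ∧ z + (r : ℂ) * Complex.I ∉ Ω := by
  by_cases hzΩ : z ∈ Ω
  · have hτ : ¬ tauZ Ω z < 0 := fun h => hz ⟨hzΩ, h⟩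
    have hex : ∃ r : ℝ, -(1 / 2) < r ∧ z + (r : ℂ) * Complex.I ∉ Ω := by
      by_contra hcon
      push_neg at hcon
      exact hτ (tau_neg (by norm_num) (fun r hr => hcon r hr))
    obtain ⟨r, hr, hnot⟩ := hex
    set k : ℕ := (⌈r - 1 / 2⌉).toNat with hk
    have hkb : r - 1 / 2 ≤ (k : ℝ) ∧ (k : ℝ) ≤ r + 1 / 2 := by
      rcases le_or_gt ⌈r - 1 / 2⌉ 0 with h0 | h0
      · have hk0 : k = 0 := Int.toNat_of_nonpos h0
        have hr2 : r - 1 / 2 ≤ 0 := by exact_mod_cast Int.ceil_le.mp h0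
        constructor <;> simp [hk0] <;> linarith
      · have hkc : (k : ℤ) = ⌈r - 1 / 2⌉ := Int.toNat_of_nonneg h0.le
        have hkr : (k : ℝ) = ((⌈r - 1 / 2⌉ : ℤ) : ℝ) := by exact_mod_cast hkc
        have hle := Int.le_ceil (r - 1 / 2)
        have hlt := Int.ceil_lt_add_one (r - 1 / 2)
        constructor <;> rw [hkr] <;> linarith
    refine ⟨r - k, by rw [abs_le]; constructor <;> linarith [hkb.1, hkb.2], ?_⟩
    intro hmem
    apply hnot
    have h2 := memAddNat hplus k hmem
    have he : z + ((r - (k : ℝ) : ℝ) : ℂ) * Complex.I + (k : ℂ) * Complex.I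
        = z + (r : ℂ) * Complex.I := by push_cast; ring
    rwa [he] at h2
  · exact ⟨0, by norm_num, by simpa using hzΩ⟩

private lemma main_ineq {Ω : Set ℂ} (hplus : ∀ z ∈ Ω, z + Complex.I ∈ Ω)
    (P : ℝ → Prop) (q : ℂ) (t : ℝ) :
    (min (ENNReal.ofReal t)
        (EMetric.infEdist q {z : ℂ | P z.re ∧ z ∉ starlikefication Ω})).toReal ≤
      (min (ENNReal.ofReal t) (EMetric.infEdist q {z : ℂ | P z.re ∧ z ∉ Ω})).toReal ∧
    (min (ENNReal.ofReal t) (EMetric.infEdist q {z : ℂ | P z.re ∧ z ∉ Ω})).toReal ≤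
      (min (ENNReal.ofReal t)
        (EMetric.infEdist q {z : ℂ | P z.re ∧ z ∉ starlikefication Ω})).toReal + 1 / 2 := by
  set S : Set ℂ := {z : ℂ | P z.re ∧ z ∉ Ω} with hS
  set S' : Set ℂ := {z : ℂ | P z.re ∧ z ∉ starlikefication Ω} with hS'
  have hsub : S ⊆ S' := fun z hz => ⟨hz.1, fun hst => hz.2 hst.1⟩
  have hanti : EMetric.infEdist q S' ≤ EMetric.infEdist q S := EMetric.infEdist_anti hsub
  have hminne : min (ENNReal.ofReal t) (EMetric.infEdist q S') ≠ ⊤ :=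
    ne_top_of_le_ne_top ENNReal.ofReal_ne_top (min_le_left _ _)
  have hminne2 : min (ENNReal.ofReal t) (EMetric.infEdist q S) ≠ ⊤ :=
    ne_top_of_le_ne_top ENNReal.ofReal_ne_top (min_le_left _ _)
  constructor
  · exact ENNReal.toReal_mono hminne2 (min_le_min le_rfl hanti)
  · set c : ENNReal := ENNReal.ofReal (1 / 2) with hc
    have key : ∀ z ∈ S', EMetric.infEdist q S ≤ edist q z + c := by
      rintro z ⟨hzP, hz⟩
      obtain ⟨r, hr, hnot⟩ := exists_near hplus hz
      have hre : (z + (r : ℂ) * Complex.I).re = z.re := by simp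
      have hwmem : z + (r : ℂ) * Complex.I ∈ S := ⟨by rw [hre]; exact hzP, hnot⟩
      calc EMetric.infEdist q S ≤ edist q (z + (r : ℂ) * Complex.I) :=
            EMetric.infEdist_le_edist_of_mem hwmem
        _ ≤ edist q z + edist z (z + (r : ℂ) * Complex.I) := edist_triangle _ _ _
        _ ≤ edist q z + c := by
            refine add_le_add_right ?_ _
            rw [edist_dist, hc]
            refine ENNReal.ofReal_le_ofReal ?_
            rw [dist_self_add_right]
            simpa using hr
    have h2 : EMetric.infEdist q S - c ≤ EMetric.infEdist q S' :=
      EMetric.le_infEdist.mpr fun z hz => tsub_le_iff_right.mpr (key z hz)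
    have h3 : EMetric.infEdist q S ≤ EMetric.infEdist q S' + c :=
      le_trans le_tsub_add (add_le_add_left h2 c)
    have hmono : Monotone (fun x : ENNReal => x + c) := fun u v huv => add_le_add_left huv c
    have h4 : min (ENNReal.ofReal t) (EMetric.infEdist q S)
        ≤ min (ENNReal.ofReal t) (EMetric.infEdist q S') + c := by
      calc min (ENNReal.ofReal t) (EMetric.infEdist q S)
          ≤ min (ENNReal.ofReal t + c) (EMetric.infEdist q S' + c) :=
            min_le_min (le_add_right le_rfl) h3
        _ = min (ENNReal.ofReal t) (EMetric.infEdist q S') + c := (hmono.map_min).symm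
    calc (min (ENNReal.ofReal t) (EMetric.infEdist q S)).toReal
        ≤ (min (ENNReal.ofReal t) (EMetric.infEdist q S') + c).toReal :=
          ENNReal.toReal_mono
            (ENNReal.add_ne_top.mpr ⟨hminne, ENNReal.ofReal_ne_top⟩) h4
      _ = (min (ENNReal.ofReal t) (EMetric.infEdist q S')).toReal + 1 / 2 := by
          rw [ENNReal.toReal_add hminne (by simp [hc]), hc,
            ENNReal.toReal_ofReal (by norm_num)]

private lemma rect_in_star {Ω : Set ℂ} (hopen : IsOpen Ω)
    (hplus : ∀ z ∈ Ω, z + Complex.I ∈ Ω) {x₁ x₂ : ℝ}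
    (hmem : ∀ x ∈ Set.Icc x₁ x₂, ∀ s : ℝ, ∃ n : ℕ,
      (x : ℂ) + ((s + n : ℝ) : ℂ) * Complex.I ∈ Ω) :
    ∃ T : ℝ, ∀ x ∈ Set.Icc x₁ x₂, ∀ u : ℝ, T ≤ u →
      (x : ℂ) + (u : ℂ) * Complex.I ∈ starlikefication Ω := by
  classical
  set K : Set ℂ := (fun p : ℝ × ℝ => ((p.1 : ℂ) + (p.2 : ℂ) * Complex.I)) ''
    (Set.Icc x₁ x₂ ×ˢ Set.Icc (0 : ℝ) 1) with hKdef
  have hK : IsCompact K := (isCompact_Icc.prod isCompact_Icc).image (by continuity)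
  have hQ : ∀ z ∈ K, ∃ n : ℕ, ∃ ε : ℝ, 0 < ε ∧
      ∀ w : ℂ, dist w z < ε → w + (n : ℂ) * Complex.I ∈ Ω := by
    rintro z ⟨⟨x, s⟩, ⟨hx, hs⟩, rfl⟩
    obtain ⟨n, hn⟩ := hmem x hx s
    obtain ⟨ε, hε, hball⟩ := Metric.isOpen_iff.mp hopen _ hn
    refine ⟨n, ε, hε, fun w hw => hball ?_⟩
    have he : (x : ℂ) + ((s + n : ℝ) : ℂ) * Complex.I
        = ((x : ℂ) + (s : ℂ) * Complex.I) + (n : ℂ) * Complex.I := by push_cast; ring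
    have hd : dist (w + (n : ℂ) * Complex.I) ((x : ℂ) + ((s + n : ℝ) : ℂ) * Complex.I)
        = dist w ((x : ℂ) + (s : ℂ) * Complex.I) := by rw [he, dist_add_right]
    exact Metric.mem_ball.mpr (by rw [hd]; exact hw)
  choose! nn ee hee hball using hQ
  obtain ⟨F, hFK, hFcov⟩ := hK.elim_nhds_subcover (fun z => Metric.ball z (ee z))
    (fun z hz => Metric.ball_mem_nhds z (hee z hz))
  set N : ℕ := F.sup nn with hN
  have hrect : ∀ w ∈ K, ∀ m : ℕ, N ≤ m → w + (m : ℂ) * Complex.I ∈ Ω := by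
    intro w hw m hm
    have hw2 := hFcov hw
    simp only [Set.mem_iUnion, exists_prop] at hw2
    obtain ⟨z, hzF, hwz⟩ := hw2
    have h1 : w + (nn z : ℂ) * Complex.I ∈ Ω := hball z (hFK z hzF) w (Metric.mem_ball.mp hwz)
    have hnz : nn z ≤ m := le_trans (Finset.le_sup hzF) hm
    have h2 := memAddNat hplus (m - nn z) h1
    have he : w + (nn z : ℂ) * Complex.I + ((m - nn z : ℕ) : ℂ) * Complex.I
        = w + (m : ℂ) * Complex.I := by
      push_cast [Nat.cast_sub hnz]; ring
    rwa [he] at h2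
  refine ⟨(N : ℝ) + 2, fun x hx u hu => ?_⟩
  have hΩv : ∀ v : ℝ, (N : ℝ) + 1 ≤ v → (x : ℂ) + (v : ℂ) * Complex.I ∈ Ω := by
    intro v hv
    have h0v : (0 : ℝ) ≤ v := le_trans (by positivity) hv
    have hfl0 : (0 : ℤ) ≤ ⌊v⌋ := Int.floor_nonneg.mpr h0v
    have hwK : (x : ℂ) + ((Int.fract v : ℝ) : ℂ) * Complex.I ∈ K :=
      ⟨(x, Int.fract v), ⟨hx, ⟨Int.fract_nonneg v, (Int.fract_lt_one v).le⟩⟩, rfl⟩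
    have hNm : N ≤ ⌊v⌋.toNat := by
      rw [Int.le_toNat hfl0, Int.le_floor]
      push_cast
      linarith
    have h3 := hrect _ hwK ⌊v⌋.toNat hNm
    have hcast : ((⌊v⌋.toNat : ℕ) : ℝ) = ((⌊v⌋ : ℤ) : ℝ) := by
      exact_mod_cast Int.toNat_of_nonneg hfl0
    have hsum : Int.fract v + ((⌊v⌋.toNat : ℕ) : ℝ) = v := by
      rw [hcast]; exact Int.fract_add_floor v
    have hsC : ((Int.fract v : ℝ) : ℂ) + ((⌊v⌋.toNat : ℕ) : ℂ) = (v : ℂ) := by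
      exact_mod_cast hsum
    have he2 : (x : ℂ) + ((Int.fract v : ℝ) : ℂ) * Complex.I
          + ((⌊v⌋.toNat : ℕ) : ℂ) * Complex.I
        = (x : ℂ) + (v : ℂ) * Complex.I := by linear_combination Complex.I * hsC
    rwa [he2] at h3
  refine ⟨hΩv u (by linarith), tau_neg (x := -(1/2)) (by norm_num) ?_⟩
  intro r hr
  have he : (x : ℂ) + (u : ℂ) * Complex.I + (r : ℂ) * Complex.I
      = (x : ℂ) + ((u + r : ℝ) : ℂ) * Complex.I := by push_cast; ring
  rw [he]
  exact hΩv (u + r) (by linarith)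

private lemma strip_mem {Ω : Set ℂ} {a b : EReal}
    (hstrip : (⋃ n : ℕ, (fun z => z - (n : ℂ) * Complex.I) '' Ω)
      = {z : ℂ | a < (z.re : EReal) ∧ (z.re : EReal) < b})
    {x : ℝ} (ha : a < (x : EReal)) (hb : (x : EReal) < b) (s : ℝ) :
    ∃ n : ℕ, (x : ℂ) + ((s + n : ℝ) : ℂ) * Complex.I ∈ Ω := by
  have hre : ((x : ℂ) + (s : ℂ) * Complex.I).re = x := by simp
  have hz : ((x : ℂ) + (s : ℂ) * Complex.I)
      ∈ {z : ℂ | a < (z.re : EReal) ∧ (z.re : EReal) < b} := by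
    rw [Set.mem_setOf_eq, hre]; exact ⟨ha, hb⟩
  rw [← hstrip] at hz
  simp only [Set.mem_iUnion, Set.mem_image] at hz
  obtain ⟨n, w, hwΩ, hwe⟩ := hz
  refine ⟨n, ?_⟩
  have hw : w = (x : ℂ) + ((s + n : ℝ) : ℂ) * Complex.I := by
    push_cast
    linear_combination hwe
  rwa [← hw]

private lemma strip_pos {Ω : Set ℂ} {a b : EReal}
    (hstrip : (⋃ n : ℕ, (fun z => z - (n : ℂ) * Complex.I) '' Ω)
      = {z : ℂ | a < (z.re : EReal) ∧ (z.re : EReal) < b})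
    (haxis : ∀ t : ℝ, 0 < t → (t : ℂ) * Complex.I ∈ Ω) :
    a < ((0 : ℝ) : EReal) ∧ ((0 : ℝ) : EReal) < b := by
  have hI : Complex.I ∈ Ω := by simpa using haxis 1 one_pos
  have hmem : Complex.I ∈ ⋃ n : ℕ, (fun z => z - (n : ℂ) * Complex.I) '' Ω :=
    Set.mem_iUnion.mpr ⟨0, ⟨Complex.I, hI, by simp⟩⟩
  rw [hstrip] at hmem
  simpa using hmem

private lemma dist_shift_mono {c t : ℝ} {w : ℂ} (h : w.re * c ≤ 0) :
    dist ((0 : ℂ) + (t : ℂ) * Complex.I) w ≤ dist (((c : ℝ) : ℂ) + (t : ℂ) * Complex.I) w := by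
  rw [Complex.dist_eq, Complex.dist_eq, Complex.norm_def, Complex.norm_def]
  apply Real.sqrt_le_sqrt
  simp only [Complex.normSq_apply, Complex.sub_re, Complex.sub_im, Complex.add_re,
    Complex.add_im, Complex.ofReal_re, Complex.ofReal_im, Complex.mul_re, Complex.mul_im,
    Complex.I_re, Complex.I_im, Complex.zero_re, Complex.zero_im]
  nlinarith [sq_nonneg c]

private lemma re_le_dist (q w : ℂ) : |q.re - w.re| ≤ dist q w := by
  rw [Complex.dist_eq]
  simpa using Complex.abs_re_le_norm (q - w)

private lemma im_le_dist (q w : ℂ) : |q.im - w.im| ≤ dist q w := by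
  rw [Complex.dist_eq]
  simpa using Complex.abs_im_le_norm (q - w)

private lemma side_lower {Ω : Set ℂ} (P : ℝ → Prop) {x₁ x₂ R T₀ : ℝ} (hR : 0 < R)
    (hP : ∀ x : ℝ, P x → x ∈ Set.Icc x₁ x₂ ∨ R ≤ |x|)
    (hrect : ∀ x ∈ Set.Icc x₁ x₂, ∀ u : ℝ, T₀ ≤ u →
      (x : ℂ) + (u : ℂ) * Complex.I ∈ starlikefication Ω)
    {t : ℝ} (ht : R ≤ t) (ht2 : T₀ + R ≤ t) :
    R ≤ (min (ENNReal.ofReal t)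
      (EMetric.infEdist ((0 : ℂ) + (t : ℂ) * Complex.I)
        {z : ℂ | P z.re ∧ z ∉ starlikefication Ω})).toReal := by
  set q : ℂ := (0 : ℂ) + (t : ℂ) * Complex.I with hq
  have hqre : q.re = 0 := by simp [hq]
  have hqim : q.im = t := by simp [hq]
  have hdist : ∀ w : ℂ, P w.re → w ∉ starlikefication Ω → R ≤ dist q w := by
    intro w hPw hw
    rcases hP w.re hPw with hIcc | hbig
    · have him : w.im < T₀ := by
        by_contra hle
        push_neg at hle
        apply hw
        have h2 := hrect w.re hIcc w.im hle
        rwa [Complex.re_add_im] at h2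
      have h3 := im_le_dist q w
      rw [hqim] at h3
      calc R ≤ t - w.im := by linarith
        _ ≤ |t - w.im| := le_abs_self _
        _ ≤ dist q w := h3
    · have h3 := re_le_dist q w
      rw [hqre] at h3
      calc R ≤ |w.re| := hbig
        _ = |0 - w.re| := by rw [zero_sub, abs_neg]
        _ ≤ dist q w := h3
  have hminle : ENNReal.ofReal R ≤ min (ENNReal.ofReal t)
      (EMetric.infEdist q {z : ℂ | P z.re ∧ z ∉ starlikefication Ω}) := by
    refine le_min (ENNReal.ofReal_le_ofReal ht) ?_
    refine EMetric.le_infEdist.mpr ?_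
    rintro z ⟨hPz, hz⟩
    rw [edist_dist]
    exact ENNReal.ofReal_le_ofReal (hdist z hPz hz)
  have hne : min (ENNReal.ofReal t)
      (EMetric.infEdist q {z : ℂ | P z.re ∧ z ∉ starlikefication Ω}) ≠ ⊤ :=
    ne_top_of_le_ne_top ENNReal.ofReal_ne_top (min_le_left _ _)
  calc R = (ENNReal.ofReal R).toReal := (ENNReal.toReal_ofReal hR.le).symm
    _ ≤ _ := ENNReal.toReal_mono hne hminle

end DeltaAux

/-- **Lemma.** Let `Ω ⊊ ℂ` be a domain asymptotically starlike at infinity of parabolic type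
with `0 ∉ Ω` and `it ∈ Ω` for all `t > 0`. Then for every `t > 0`,
`δ^±_{Ω*,0}(t) ≤ δ^±_{Ω,0}(t) ≤ δ^±_{Ω*,0}(t) + 1/2`; in particular, for the curve
`σ(t) = (δ⁺_{Ω*,0}(t) − δ⁻_{Ω*,0}(t))/2 + it` one has `δ_Ω(σ(t)) → +∞` as `t → +∞`. -/
theorem delta_starlikefication_comparison
    (Ω : Set ℂ) (hdom : IsPlaneDomain Ω) (hne : Ω ≠ Set.univ)
    (hAS : AsympStarlikeParabolic Ω)
    (h0 : (0 : ℂ) ∉ Ω) (haxis : ∀ t : ℝ, 0 < t → (t : ℂ) * Complex.I ∈ Ω) :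
    (∀ t : ℝ, 0 < t →
      (deltaPlus (starlikefication Ω) 0 t ≤ deltaPlus Ω 0 t ∧
        deltaPlus Ω 0 t ≤ deltaPlus (starlikefication Ω) 0 t + 1 / 2) ∧
      (deltaMinus (starlikefication Ω) 0 t ≤ deltaMinus Ω 0 t ∧
        deltaMinus Ω 0 t ≤ deltaMinus (starlikefication Ω) 0 t + 1 / 2)) ∧
    Tendsto (fun t : ℝ => deltaO Ω (sigmaCurve Ω t)) atTop atTop := by
  obtain ⟨hopen, hconn⟩ := hdom
  obtain ⟨hplus, a, b, hab, hpar, hstrip⟩ := hAS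
  obtain ⟨ha0, hb0⟩ := strip_pos hstrip haxis
  refine ⟨fun t ht =>
    ⟨main_ineq hplus (fun x => (0:ℂ).re ≤ x) ((0:ℂ) + (t:ℂ) * Complex.I) t,
     main_ineq hplus (fun x => x ≤ (0:ℂ).re) ((0:ℂ) + (t:ℂ) * Complex.I) t⟩, ?_⟩
  -- growth of δ⁺ + δ⁻ for the starlike-fication
  have hgrow : ∀ R : ℝ, 0 < R → ∃ T : ℝ, ∀ t : ℝ, T ≤ t →
      R ≤ deltaPlus (starlikefication Ω) 0 t + deltaMinus (starlikefication Ω) 0 t := by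
    intro R hR
    rcases hpar with hbot | htop
    · have hmem : ∀ x ∈ Set.Icc (-R) 0, ∀ s : ℝ, ∃ n : ℕ,
          (x : ℂ) + ((s + n : ℝ) : ℂ) * Complex.I ∈ Ω := by
        intro x hx s
        refine strip_mem hstrip ?_ ?_ s
        · rw [hbot]; exact EReal.bot_lt_coe x
        · exact lt_of_le_of_lt (by exact_mod_cast hx.2) hb0
      obtain ⟨T₀, hT₀⟩ := rect_in_star hopen hplus hmem
      refine ⟨max R (T₀ + R), fun t ht => ?_⟩
      have hml : R ≤ deltaMinus (starlikefication Ω) 0 t := by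
        refine side_lower (Ω := Ω) (fun x => x ≤ (0:ℂ).re) hR ?_ hT₀
          (le_trans (le_max_left _ _) ht) (le_trans (le_max_right _ _) ht)
        intro x hx
        simp only [Complex.zero_re] at hx
        rcases le_total (-R) x with h | h
        · exact Or.inl ⟨h, hx⟩
        · exact Or.inr (by rw [_root_.abs_of_nonpos hx]; linarith)
      have hpl : 0 ≤ deltaPlus (starlikefication Ω) 0 t := ENNReal.toReal_nonneg
      linarith
    · have hmem : ∀ x ∈ Set.Icc 0 R, ∀ s : ℝ, ∃ n : ℕ,
          (x : ℂ) + ((s + n : ℝ) : ℂ) * Complex.I ∈ Ω := by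
        intro x hx s
        refine strip_mem hstrip ?_ ?_ s
        · exact lt_of_lt_of_le ha0 (by exact_mod_cast hx.1)
        · rw [htop]; exact EReal.coe_lt_top x
      obtain ⟨T₀, hT₀⟩ := rect_in_star hopen hplus hmem
      refine ⟨max R (T₀ + R), fun t ht => ?_⟩
      have hml : R ≤ deltaPlus (starlikefication Ω) 0 t := by
        refine side_lower (Ω := Ω) (fun x => (0:ℂ).re ≤ x) hR ?_ hT₀
          (le_trans (le_max_left _ _) ht) (le_trans (le_max_right _ _) ht)
        intro x hx
        simp only [Complex.zero_re] at hx
        rcases le_total x R with h | h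
        · exact Or.inl ⟨hx, h⟩
        · exact Or.inr (by rw [_root_.abs_of_nonneg hx]; linarith)
      have hpl : 0 ≤ deltaMinus (starlikefication Ω) 0 t := ENNReal.toReal_nonneg
      linarith
  -- lower bound for δ_Ω along σ
  have hlow : ∀ t : ℝ,
      (deltaPlus (starlikefication Ω) 0 t + deltaMinus (starlikefication Ω) 0 t) / 4
        ≤ deltaO Ω (sigmaCurve Ω t) := by
    intro t
    set dp := deltaPlus (starlikefication Ω) 0 t with hdp
    set dm := deltaMinus (starlikefication Ω) 0 t with hdm
    have hdp0 : 0 ≤ dp := ENNReal.toReal_nonneg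
    have hdm0 : 0 ≤ dm := ENNReal.toReal_nonneg
    set c : ℝ := (dp - dm) / 2 with hc
    have hσ : sigmaCurve Ω t = ((c : ℝ) : ℂ) + (t : ℂ) * Complex.I := by
      rw [hc, hdp, hdm]; rfl
    have hple : ∀ w : ℂ, w ∉ Ω → (0:ℂ).re ≤ w.re →
        dp ≤ dist ((0:ℂ) + (t:ℂ) * Complex.I) w := by
      intro w hw hre
      have hwmem : w ∈ {z : ℂ | (0:ℂ).re ≤ z.re ∧ z ∉ starlikefication Ω} :=
        ⟨hre, fun hst => hw hst.1⟩
      have h1 : min (ENNReal.ofReal t) (EMetric.infEdist ((0:ℂ) + (t:ℂ) * Complex.I)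
          {z : ℂ | (0:ℂ).re ≤ z.re ∧ z ∉ starlikefication Ω})
            ≤ edist ((0:ℂ) + (t:ℂ) * Complex.I) w :=
        le_trans (min_le_right _ _) (EMetric.infEdist_le_edist_of_mem hwmem)
      have h2 := ENNReal.toReal_mono (edist_ne_top ((0:ℂ) + (t:ℂ) * Complex.I) w) h1
      rw [← dist_edist] at h2
      rw [hdp]
      exact h2
    have hmle : ∀ w : ℂ, w ∉ Ω → w.re ≤ (0:ℂ).re →
        dm ≤ dist ((0:ℂ) + (t:ℂ) * Complex.I) w := by
      intro w hw hre
      have hwmem : w ∈ {z : ℂ | z.re ≤ (0:ℂ).re ∧ z ∉ starlikefication Ω} :=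
        ⟨hre, fun hst => hw hst.1⟩
      have h1 : min (ENNReal.ofReal t) (EMetric.infEdist ((0:ℂ) + (t:ℂ) * Complex.I)
          {z : ℂ | z.re ≤ (0:ℂ).re ∧ z ∉ starlikefication Ω})
            ≤ edist ((0:ℂ) + (t:ℂ) * Complex.I) w :=
        le_trans (min_le_right _ _) (EMetric.infEdist_le_edist_of_mem hwmem)
      have h2 := ENNReal.toReal_mono (edist_ne_top ((0:ℂ) + (t:ℂ) * Complex.I) w) h1
      rw [← dist_edist] at h2
      rw [hdm]
      exact h2
    have hkey : ∀ w : ℂ, w ∈ Ωᶜ → (dp + dm) / 4 ≤ dist (sigmaCurve Ω t) w := by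
      intro w hw
      have hw' : w ∉ Ω := hw
      have hdistσ : dist ((0:ℂ) + (t:ℂ) * Complex.I) (sigmaCurve Ω t) = |c| := by
        rw [hσ, Complex.dist_eq]
        have he : ((0:ℂ) + (t:ℂ) * Complex.I) - (((c : ℝ) : ℂ) + (t:ℂ) * Complex.I)
            = ((-c : ℝ) : ℂ) := by push_cast; ring
        rw [he, Complex.norm_real, Real.norm_eq_abs, abs_neg]
      have htri : dist ((0:ℂ) + (t:ℂ) * Complex.I) w ≤ |c| + dist (sigmaCurve Ω t) w := by
        calc dist ((0:ℂ) + (t:ℂ) * Complex.I) w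
            ≤ dist ((0:ℂ) + (t:ℂ) * Complex.I) (sigmaCurve Ω t) + dist (sigmaCurve Ω t) w :=
              dist_triangle _ _ _
          _ = |c| + dist (sigmaCurve Ω t) w := by rw [hdistσ]
      have hreσ : (sigmaCurve Ω t).re = c := by rw [hσ]; simp
      have hre' : |w.re - c| ≤ dist (sigmaCurve Ω t) w := by
        have h3 := re_le_dist (sigmaCurve Ω t) w
        rw [hreσ] at h3
        rwa [abs_sub_comm] at h3
      rcases le_total 0 w.re with hwre | hwre
      · have h1 := hple w hw' (by simpa using hwre)
        rcases le_total 0 c with hc0 | hc0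
        · rw [_root_.abs_of_nonneg hc0] at htri
          linarith
        · have hsq : dist ((0:ℂ) + (t:ℂ) * Complex.I) w ≤ dist (sigmaCurve Ω t) w := by
            rw [hσ]
            exact dist_shift_mono (mul_nonpos_of_nonneg_of_nonpos hwre hc0)
          have hrc : -c ≤ |w.re - c| := by
            rw [_root_.abs_of_nonneg (by linarith)]; linarith
          linarith
      · have h1 := hmle w hw' (by simpa using hwre)
        rcases le_total c 0 with hc0 | hc0
        · rw [_root_.abs_of_nonpos hc0] at htri
          linarith
        · have hsq : dist ((0:ℂ) + (t:ℂ) * Complex.I) w ≤ dist (sigmaCurve Ω t) w := by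
            rw [hσ]
            exact dist_shift_mono (mul_nonpos_of_nonpos_of_nonneg hwre hc0)
          have hrc : c ≤ |w.re - c| := by
            rw [_root_.abs_of_nonpos (by linarith)]; linarith
          linarith
    have hb4 : 0 ≤ (dp + dm) / 4 := by linarith
    have hofle : ENNReal.ofReal ((dp + dm) / 4) ≤ EMetric.infEdist (sigmaCurve Ω t) Ωᶜ := by
      refine EMetric.le_infEdist.mpr ?_
      intro w hw
      rw [edist_dist]
      exact ENNReal.ofReal_le_ofReal (hkey w hw)
    have hneT : EMetric.infEdist (sigmaCurve Ω t) Ωᶜ ≠ ⊤ :=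
      Metric.infEdist_ne_top ⟨0, h0⟩
    calc (dp + dm) / 4 = (ENNReal.ofReal ((dp + dm) / 4)).toReal :=
          (ENNReal.toReal_ofReal hb4).symm
      _ ≤ (EMetric.infEdist (sigmaCurve Ω t) Ωᶜ).toReal := ENNReal.toReal_mono hneT hofle
      _ = deltaO Ω (sigmaCurve Ω t) := rfl
  rw [tendsto_atTop]
  intro B
  obtain ⟨T, hT⟩ := hgrow (4 * |B| + 1) (by positivity)
  filter_upwards [eventually_ge_atTop T] with t ht
  have h1 := hT t ht
  have h2 := hlow t
  have h3 : B ≤ |B| := le_abs_self B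
  linarith
end
end
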